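/- Fix M > 0 and a ∈ ℝ with |a| < M, and set r₊ = M + √(M² − a²) and Δ(r) = r² − 2Mr + a². Then for every r > r₊, 2(a² + r²)/Δ(r) − a²/(a² + r²) − 2 − 4M/r − 6M²/r² > 0. -/

import Mathlib

/-- Positivity of the quantity `J = 2(a²+r²)/Δ − a²/(a²+r²) − 2 − 4M/r − 6M²/r²`
on the Kerr exterior `r > r₊ = M + √(M² − a²)`, where `Δ(r) = r² − 2Mr + a²`. -/
theorem J_positive (M a : ℝ) (hM : 0 < M) (ha : |a| < M) :
    ∀ r : ℝ, M + Real.sqrt (M ^ 2 - a ^ 2) < r →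
      0 < 2 * (a ^ 2 + r ^ 2) / (r ^ 2 - 2 * M * r + a ^ 2) - a ^ 2 / (a ^ 2 + r ^ 2)
          - 2 - 4 * M / r - 6 * M ^ 2 / r ^ 2 := by
  intro r hr
  have ha2 : a ^ 2 < M ^ 2 := by
    have h0 := abs_nonneg a
    nlinarith [sq_abs a]
  have hs0 : (0:ℝ) ≤ M ^ 2 - a ^ 2 := by linarith
  have hsnn : 0 ≤ Real.sqrt (M ^ 2 - a ^ 2) := Real.sqrt_nonneg _
  have hrM : M < r := by linarith
  have hr0 : 0 < r := lt_trans hM hrM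
  have hsq : Real.sqrt (M ^ 2 - a ^ 2) ^ 2 = M ^ 2 - a ^ 2 := Real.sq_sqrt hs0
  have hD : 0 < r ^ 2 - 2 * M * r + a ^ 2 := by
    have h1 : Real.sqrt (M ^ 2 - a ^ 2) < r - M := by linarith
    have h2 : Real.sqrt (M ^ 2 - a ^ 2) ^ 2 < (r - M) ^ 2 := by
      apply sq_lt_sq' <;> nlinarith
    nlinarith
  have hS : 0 < a ^ 2 + r ^ 2 := by positivity
  have hP : 0 < 2*M^2*r^4 + 12*M^3*r^3 + 12*M^3*a^2*r - a^2*r^4 - a^4*r^2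
      - 2*M*a^2*r^3 - 4*M*a^4*r - 4*M^2*a^2*r^2 - 6*M^2*a^4 := by
    have ht : (0:ℝ) ≤ M ^ 2 - a ^ 2 := by linarith
    have hrm : (0:ℝ) ≤ r - M := by linarith
    have hg1 : 0 ≤ (M^2 - a^2) * r^4 := by positivity
    have hg2 : 0 ≤ (M^2 - a^2) * (M * r^3) := by positivity
    have hg3 : 0 ≤ (M^2 - a^2) * (a^2 * r^2) := by positivity
    have hg4 : 0 ≤ (M^2 - a^2) * (M * (a^2 * r)) := by positivity
    have hg5 : 0 ≤ (M^2 - a^2) * (M^2 * a^2) := by positivity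
    have hg6 : 0 ≤ (M^2 - a^2) * (M^2 * r^2) := by positivity
    have hg8 : 0 ≤ M^3 * (r^2 * (r - M)) := by positivity
    have hg9 : 0 ≤ M^3 * (a^2 * (r - M)) := by positivity
    have hp1 : 0 < M^2 * r^4 := by positivity
    have hp2 : 0 < M^3 * r^3 := by positivity
    have hp3 : 0 ≤ M^3 * (a^2 * r) := by positivity
    nlinarith [hg1, hg2, hg3, hg4, hg5, hg6, hg8, hg9, hp1, hp2, hp3]
  have key : 2 * (a ^ 2 + r ^ 2) / (r ^ 2 - 2 * M * r + a ^ 2) - a ^ 2 / (a ^ 2 + r ^ 2)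
          - 2 - 4 * M / r - 6 * M ^ 2 / r ^ 2
      = (2*M^2*r^4 + 12*M^3*r^3 + 12*M^3*a^2*r - a^2*r^4 - a^4*r^2
      - 2*M*a^2*r^3 - 4*M*a^4*r - 4*M^2*a^2*r^2 - 6*M^2*a^4)
        / ((r ^ 2 - 2 * M * r + a ^ 2) * (a ^ 2 + r ^ 2) * r ^ 2) := by
    have hDne : r ^ 2 - 2 * M * r + a ^ 2 ≠ 0 := hD.ne'
    generalize hDg : r ^ 2 - 2 * M * r + a ^ 2 = D at hDne ⊢
    field_simp
    rw [← hDg]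
    ring
  rw [key]
  exact div_pos hP (by positivity)
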